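/- arXiv:1805.03364 — 7 statements merged into one kernel-verified Lean document; each statement's English description precedes it below -/
import Mathlib

section
/- For a monotone Boolean function f on n binary variables and a positive instance x (f(x)=1), every MC-explanation of x, when restricted to its positively-set features, yields a prime implicant of f (i.e., every extension of that partial assignment is positive, and no proper subset has this property). -/
open Finset

def trueCount {n : ℕ} (x : Fin n → Bool) : ℕ :=
  (Finset.univ.filter (fun i => x i = true)).card

def Mono {n : ℕ} (f : (Fin n → Bool) → Bool) : Prop :=
  ∀ x y : Fin n → Bool, (∀ i, x i ≤ y i) → f x ≤ f y

def MCExpl {n : ℕ} (f : (Fin n → Bool) → Bool) (x xs : Fin n → Bool) : Prop :=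
  f xs = true ∧ (∀ i, xs i ≤ x i) ∧
    ∀ x' : Fin n → Bool, f x' = true → (∀ i, x' i ≤ x i) → trueCount xs ≤ trueCount x'

def Suff {n : ℕ} (f : (Fin n → Bool) → Bool) (x : Fin n → Bool) (S : Finset (Fin n)) : Prop :=
  ∀ y : Fin n → Bool, (∀ i ∈ S, y i = x i) → f y = f x

def PIExpl {n : ℕ} (f : (Fin n → Bool) → Bool) (x : Fin n → Bool) (S : Finset (Fin n)) : Prop :=
  Suff f x S ∧ ∀ T ⊂ S, ¬ Suff f x T

theorem stmt0 {n : ℕ} (f : (Fin n → Bool) → Bool) (hf : Mono f)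
    (x xs : Fin n → Bool) (hx : f x = true) (hmc : MCExpl f x xs) :
    (∀ y : Fin n → Bool, (∀ i ∈ Finset.univ.filter (fun i => xs i = true), y i = true) → f y = true) ∧
    ∀ T ⊂ Finset.univ.filter (fun i => xs i = true),
      ¬ ∀ y : Fin n → Bool, (∀ i ∈ T, y i = true) → f y = true := by
  obtain ⟨hfs, hle, hmin⟩ := hmc
  constructor
  · intro y hy
    have : f xs ≤ f y := by
      apply hf
      intro i
      cases h : xs i with
      | false => simp
      | true => simp [hy i (by simp [h])]
    rw [hfs] at this
    exact Bool.le_iff_imp.mp this rfl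
  · intro T hT hsuf
    set z : Fin n → Bool := fun i => if i ∈ T then true else false with hz
    have hfz : f z = true := hsuf z (fun i hi => by simp [hz, hi])
    have hzx : ∀ i, z i ≤ x i := by
      intro i
      by_cases hi : i ∈ T
      · have hiS := hT.subset hi
        simp only [mem_filter] at hiS
        have := hle i
        rw [hiS.2] at this
        simpa [hz, hi] using this
      · simp [hz, hi]
    have hmin' := hmin z hfz hzx
    have hcount : trueCount z = T.card := by
      unfold trueCount
      congr 1
      ext i
      simp [hz]
    have hlt : T.card < trueCount xs := by
      unfold trueCount
      exact card_lt_card hT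
    omega
end

section
/- For a monotone Boolean function f and a positive instance x, every shortest PI-explanation of x sets all of its features positively (to true); i.e., if a PI-explanation contains a feature set to false, it is not of minimum length. -/
open Finset

theorem stmt1 {n : ℕ} (f : (Fin n → Bool) → Bool) (hf : Mono f)
    (x : Fin n → Bool) (hx : f x = true)
    (S : Finset (Fin n)) (hpi : PIExpl f x S)
    (hshort : ∀ T : Finset (Fin n), PIExpl f x T → S.card ≤ T.card) :
    ∀ i ∈ S, x i = true := by
  intro i hi
  by_contra hxi
  have hxi' : x i = false := by
    cases h : x i with
    | false => rfl
    | true => exact absurd h hxi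
  apply hpi.2 (S.erase i) (Finset.erase_ssubset hi)
  intro y hy
  have hsuff := hpi.1 (Function.update y i false) ?_
  · rw [hx] at hsuff ⊢
    have := hf (Function.update y i false) y ?_
    · rw [hsuff] at this
      exact le_antisymm (by simp) this
    · intro j
      by_cases hj : j = i
      · subst hj; simp
      · simp [Function.update_of_ne hj]
  · intro j hj
    by_cases hjr : j = i
    · subst hjr; simp [hxi']
    · rw [Function.update_of_ne hjr]
      exact hy j (Finset.mem_erase.mpr ⟨hjr, hj⟩)
end

section
/- For a monotone Boolean function f and a positive instance x, every MC-explanation of x matches some shortest PI-explanation of x, where an MC-explanation x* matches a PI-explanation z iff x* is obtained from z by setting all features outside the domain of z to false. -/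
open Finset

theorem stmt2 {n : ℕ} (f : (Fin n → Bool) → Bool) (hf : Mono f)
    (x xs : Fin n → Bool) (hx : f x = true) (hmc : MCExpl f x xs) :
    ∃ S : Finset (Fin n), PIExpl f x S ∧
      (∀ T : Finset (Fin n), PIExpl f x T → S.card ≤ T.card) ∧
      ∀ i, xs i = if i ∈ S then x i else false := by
  obtain ⟨hfs, hle, hmin⟩ := hmc
  refine ⟨Finset.univ.filter (fun i => xs i = true), ?_, ?_, ?_⟩
  case refine_3 =>
    intro i
    by_cases hi : xs i = true
    · have hxi : x i = true := by
        have := hle i; rw [hi] at this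
        exact le_antisymm (Bool.le_true _) this
      simp [hi, hxi]
    · simp [hi, Bool.eq_false_iff.mpr hi]
  all_goals {
    have hcard : trueCount xs = (Finset.univ.filter (fun i => xs i = true)).card := rfl
    have key : ∀ T : Finset (Fin n), Suff f x T →
        trueCount xs ≤ T.card := by
      intro T hsT
      set y : Fin n → Bool := fun i => if i ∈ T then x i else false with hy
      have hfy : f y = true := by
        have := hsT y (by intro i hi; simp [hy, hi])
        rw [this, hx]
      have hyx : ∀ i, y i ≤ x i := by
        intro i; by_cases hi : i ∈ T <;> simp [hy, hi]
      have h1 := hmin y hfy hyx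
      have h2 : trueCount y ≤ T.card := by
        apply Finset.card_le_card
        intro i hi
        simp only [trueCount, Finset.mem_filter, Finset.mem_univ, true_and, hy] at hi
        by_contra h
        simp [h] at hi
      omega
    have hsuff : Suff f x (Finset.univ.filter (fun i => xs i = true)) := by
      intro y hy
      have hxsy : ∀ i, xs i ≤ y i := by
        intro i
        by_cases hi : xs i = true
        · rw [hy i (by simp [hi])]
          have := hle i; rw [hi] at this ⊢
          exact this
        · simp [Bool.eq_false_iff.mpr hi]
      have := hf xs y hxsy
      rw [hfs] at this
      rw [hx]
      exact le_antisymm (Bool.le_true _) this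
    first
    | exact ⟨hsuff, by
        intro T hT hsT
        have h1 := key T hsT
        have h2 : T.card < (Finset.univ.filter (fun i => xs i = true)).card :=
          Finset.card_lt_card hT
        omega⟩
    | { intro T hT
        have := key T hT.1
        omega }
  }
end

section
/- For a monotone Boolean function f and a positive instance x, every shortest PI-explanation z of x matches some MC-explanation x* of x, i.e., the total assignment obtained from z by setting all features outside the domain of z to false is an MC-explanation of x. -/
open Finset

lemma exists_min_pi {n : ℕ} (f : (Fin n → Bool) → Bool) (x : Fin n → Bool)
    (T : Finset (Fin n)) (hT : Suff f x T) : ∃ T' ⊆ T, PIExpl f x T' := by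
  induction T using Finset.strongInduction with
  | _ T ih =>
    by_cases h : ∀ U ⊂ T, ¬ Suff f x U
    · exact ⟨T, subset_rfl, hT, h⟩
    · push_neg at h
      obtain ⟨U, hU, hUs⟩ := h
      obtain ⟨T', hT', hpi⟩ := ih U hU hUs
      exact ⟨T', hT'.trans hU.subset, hpi⟩

theorem stmt3 {n : ℕ} (f : (Fin n → Bool) → Bool) (hf : Mono f)
    (x : Fin n → Bool) (hx : f x = true)
    (S : Finset (Fin n)) (hpi : PIExpl f x S)
    (hshort : ∀ T : Finset (Fin n), PIExpl f x T → S.card ≤ T.card) :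
    MCExpl f x (fun i => if i ∈ S then x i else false) := by
  obtain ⟨hsuff, hmin⟩ := hpi
  -- every feature in S is true in x
  have hS : ∀ i ∈ S, x i = true := by
    intro i hi
    by_contra h
    have hxi : x i = false := by revert h; cases x i <;> simp
    apply hmin (S.erase i) (Finset.erase_ssubset hi)
    intro y hy
    have h1 : f (fun j => if j = i then false else y j) = f x := by
      apply hsuff
      intro j hj
      by_cases hji : j = i
      · subst hji; simp [hxi]
      · simp only [if_neg hji]; exact hy j (Finset.mem_erase.mpr ⟨hji, hj⟩)
    have h2 : f (fun j => if j = i then false else y j) ≤ f y := by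
      apply hf; intro j; by_cases hji : j = i <;> simp [hji]
    rw [hx] at h1 ⊢
    cases hfy : f y
    · rw [h1, hfy] at h2; exact absurd h2 (by simp)
    · rfl
  have hfxs : f (fun i => if i ∈ S then x i else false) = true := by
    rw [hsuff _ (fun i hi => by simp [hi]), hx]
  refine ⟨hfxs, fun i => ?_, ?_⟩
  · by_cases hi : i ∈ S <;> simp [hi]
  · intro x' hfx' hle
    set T := Finset.univ.filter (fun i => x' i = true) with hTdef
    have hTsuff : Suff f x T := by
      intro y hy
      have hle' : ∀ i, x' i ≤ y i := by
        intro i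
        cases h : x' i
        · simp
        · have hxi : x i = true := by
            have := hle i; rw [h] at this; revert this; cases x i <;> simp
          rw [hy i (by simp [hTdef, h]), hxi]
      have := hf x' y hle'
      rw [hfx'] at this
      rw [hx]
      revert this; cases f y <;> simp
    obtain ⟨T', hT'sub, hT'pi⟩ := exists_min_pi f x T hTsuff
    have hcard : trueCount (fun i => if i ∈ S then x i else false) = S.card := by
      unfold trueCount
      congr 1
      ext i
      simp only [Finset.mem_filter, Finset.mem_univ, true_and]
      constructor
      · intro h
        by_contra hi
        simp [hi] at h
      · intro h; simp [h, hS i h]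
    rw [hcard]
    calc S.card ≤ T'.card := hshort T' hT'pi
    _ ≤ T.card := Finset.card_le_card hT'sub
    _ = trueCount x' := rfl
end

section
/- For a monotone Boolean function f and a positive instance x, the length of every shortest PI-explanation of x equals the number of true features in every MC-explanation of x. -/
open Finset

lemma exists_min_suff {n : ℕ} (f : (Fin n → Bool) → Bool) (x : Fin n → Bool) :
    ∀ A : Finset (Fin n), Suff f x A → ∃ B ⊆ A, PIExpl f x B := by
  intro A
  induction A using Finset.strongInduction with
  | _ A ih =>
    intro hA
    by_cases h : ∀ T ⊂ A, ¬ Suff f x T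
    · exact ⟨A, le_refl A, hA, h⟩
    · push_neg at h
      obtain ⟨T, hTA, hT⟩ := h
      obtain ⟨B, hBT, hB⟩ := ih T hTA hT
      exact ⟨B, hBT.trans hTA.subset, hB⟩

theorem stmt6 {n : ℕ} (f : (Fin n → Bool) → Bool) (hf : Mono f)
    (x : Fin n → Bool) (hx : f x = true)
    (S : Finset (Fin n)) (hpi : PIExpl f x S)
    (hshort : ∀ T : Finset (Fin n), PIExpl f x T → S.card ≤ T.card)
    (xs : Fin n → Bool) (hmc : MCExpl f x xs) :
    S.card = trueCount xs := by
  obtain ⟨hxs, hle, hmin⟩ := hmc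
  apply le_antisymm
  · -- S.card ≤ trueCount xs via minimal sufficient subset of support of xs
    set A : Finset (Fin n) := Finset.univ.filter (fun i => xs i = true) with hAdef
    have hAsuff : Suff f x A := by
      intro y hy
      rw [hx]
      have : f xs ≤ f y := by
        apply hf
        intro i
        by_cases hi : xs i = true
        · have hiA : i ∈ A := by simp [hAdef, hi]
          have hxi : x i = true := by
            have := hle i
            rw [hi] at this
            exact le_antisymm (by simp) this
          rw [hi, hy i hiA, hxi]
        · simp [Bool.not_eq_true] at hi
          simp [hi]
      rw [hxs] at this
      exact le_antisymm (by simp) this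
    obtain ⟨B, hBA, hB⟩ := exists_min_suff f x A hAsuff
    calc S.card ≤ B.card := hshort B hB
      _ ≤ A.card := Finset.card_le_card hBA
      _ = trueCount xs := rfl
  · -- trueCount xs ≤ S.card via restriction of x to S
    set x' : Fin n → Bool := fun i => if i ∈ S then x i else false with hx'def
    have hx'true : f x' = true := by
      rw [hpi.1 x' (fun i hi => by simp [hx'def, hi]), hx]
    have hx'le : ∀ i, x' i ≤ x i := by
      intro i
      by_cases hi : i ∈ S <;> simp [hx'def, hi]
    calc trueCount xs ≤ trueCount x' := hmin x' hx'true hx'le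
      _ ≤ S.card := by
          apply Finset.card_le_card
          intro i hi
          simp only [trueCount, Finset.mem_filter, hx'def] at hi
          by_contra h
          simp [h] at hi
end

section
/- For a naive Bayes classifier with binary features, if for every feature i the likelihood ratio satisfies Pr(X_i=1|c)/Pr(X_i=1|c̄) ≥ Pr(X_i=0|c)/Pr(X_i=0|c̄), then the decision function f(x) = [Pr(c|x) ≥ T] is a monotone Boolean function of x, for any threshold T ∈ (0,1). -/
open Finset

noncomputable def jointW {n : ℕ} (p : ℝ) (θ : Fin n → Bool → ℝ) (x : Fin n → Bool) : ℝ :=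
  p * ∏ i, θ i (x i)

theorem stmt12 {n : ℕ} (p : ℝ) (θ η : Fin n → Bool → ℝ)
    (hp0 : 0 < p) (hp1 : p < 1)
    (hθ : ∀ i b, 0 < θ i b ∧ θ i b < 1) (hη : ∀ i b, 0 < η i b ∧ η i b < 1)
    (hlr : ∀ i, θ i false / η i false ≤ θ i true / η i true)
    (T : ℝ) (hT0 : 0 < T) (hT1 : T < 1) :
    Mono (fun x : Fin n → Bool =>
      decide (T ≤ jointW p θ x / (jointW p θ x + jointW (1 - p) η x))) := by

  intro x y hxy
  have hAx : 0 < jointW p θ x := mul_pos hp0 (Finset.prod_pos fun i _ => (hθ i _).1)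
  have hAy : 0 < jointW p θ y := mul_pos hp0 (Finset.prod_pos fun i _ => (hθ i _).1)
  have hBx : 0 < jointW (1 - p) η x :=
    mul_pos (by linarith) (Finset.prod_pos fun i _ => (hη i _).1)
  have hBy : 0 < jointW (1 - p) η y :=
    mul_pos (by linarith) (Finset.prod_pos fun i _ => (hη i _).1)
  have hterm : ∀ i, θ i (x i) * η i (y i) ≤ θ i (y i) * η i (x i) := by
    intro i
    have h1 := (hη i false).1
    have h2 := (hη i true).1
    have hlr' : θ i false * η i true ≤ θ i true * η i false :=
      (div_le_div_iff₀ h1 h2).mp (hlr i)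
    have hle := hxy i
    cases hx : x i <;> cases hy : y i
    · exact le_rfl
    · exact hlr'
    · rw [hx, hy] at hle; exact absurd hle (by decide)
    · exact le_rfl
  have hprod : (∏ i, θ i (x i)) * ∏ i, η i (y i) ≤ (∏ i, θ i (y i)) * ∏ i, η i (x i) := by
    rw [← Finset.prod_mul_distrib, ← Finset.prod_mul_distrib]
    exact Finset.prod_le_prod
      (fun i _ => mul_nonneg (hθ i _).1.le (hη i _).1.le)
      (fun i _ => hterm i)
  have key : jointW p θ x * jointW (1 - p) η y ≤ jointW p θ y * jointW (1 - p) η x := by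
    unfold jointW
    have hp' : 0 < p * (1 - p) := mul_pos hp0 (by linarith)
    calc p * (∏ i, θ i (x i)) * ((1 - p) * ∏ i, η i (y i))
        = p * (1 - p) * ((∏ i, θ i (x i)) * ∏ i, η i (y i)) := by ring
      _ ≤ p * (1 - p) * ((∏ i, θ i (y i)) * ∏ i, η i (x i)) := by
          exact mul_le_mul_of_nonneg_left hprod hp'.le
      _ = p * (∏ i, θ i (y i)) * ((1 - p) * ∏ i, η i (x i)) := by ring
  have hQ : jointW p θ x / (jointW p θ x + jointW (1 - p) η x) ≤
      jointW p θ y / (jointW p θ y + jointW (1 - p) η y) := by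
    rw [div_le_div_iff₀ (by linarith) (by linarith)]
    nlinarith [key]
  simp only []
  by_cases hP : T ≤ jointW p θ x / (jointW p θ x + jointW (1 - p) η x)
  · have hQ' : T ≤ jointW p θ y / (jointW p θ y + jointW (1 - p) η y) := le_trans hP hQ
    simp [hP, hQ']
  · simp [hP]
end

section
/- Let f be a Boolean function represented as a conjunction f(x) = g(x) ∧ (x_j = b) for some fixed feature j and value b (i.e., f is g conditioned on a literal). Then every positive instance of f sets x_j = b, and the MC-explanations of a positive instance x of f are exactly the MC-explanations of x under the restricted function h on the remaining features, extended by x_j = b—assuming b = true contributes 1 to cardinality counts uniformly. -/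
open Finset

lemma countE {n : ℕ} (j : Fin n) (y : Fin n → Bool) :
    trueCount y
      = ((Finset.univ.erase j).filter (fun i => y i = true)).card
        + (if y j = true then 1 else 0) := by
  unfold trueCount
  conv_lhs => rw [← Finset.insert_erase (Finset.mem_univ j)]
  rw [Finset.filter_insert]
  split_ifs with h
  · rw [Finset.card_insert_of_notMem (by simp)]
  · simp

lemma filterE_update {n : ℕ} (j : Fin n) (y : Fin n → Bool) (c : Bool) :
    ((Finset.univ.erase j).filter (fun i => Function.update y j c i = true))
      = ((Finset.univ.erase j).filter (fun i => y i = true)) := by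
  apply Finset.filter_congr
  intro i hi
  simp [Function.update_of_ne (Finset.ne_of_mem_erase hi)]

theorem stmt17 {n : ℕ} (f g : (Fin n → Bool) → Bool) (j : Fin n) (b : Bool)
    (hfg : ∀ x : Fin n → Bool, f x = (g x && (x j == b)))
    (x : Fin n → Bool) (hx : f x = true) :
    (∀ x' : Fin n → Bool, f x' = true → x' j = b) ∧
    ∀ xs : Fin n → Bool, MCExpl f x xs ↔
      (xs j = b ∧
        MCExpl (fun y => g (Function.update y j b)) x (Function.update xs j false)) := by
  have hpos : ∀ x' : Fin n → Bool, f x' = true ↔ (g x' = true ∧ x' j = b) := by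
    intro x'
    rw [hfg x', Bool.and_eq_true, beq_iff_eq]
  have hxj : x j = b := ((hpos x).mp hx).2
  -- the "h" count lemma: trueCount (update y j c)
  have hcount : ∀ (y : Fin n → Bool) (c : Bool),
      trueCount (Function.update y j c)
        = ((Finset.univ.erase j).filter (fun i => y i = true)).card
          + (if c then 1 else 0) := by
    intro y c
    rw [countE j, filterE_update]
    simp
  refine ⟨fun x' h => ((hpos x').mp h).2, fun xs => ?_⟩
  constructor
  · rintro ⟨h1, h2, h3⟩
    have hxsj : xs j = b := ((hpos xs).mp h1).2
    have hxs_eq : Function.update xs j b = xs := by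
      funext i
      rcases eq_or_ne i j with rfl | hij
      · simp [hxsj]
      · simp [Function.update_of_ne hij]
    refine ⟨hxsj, ?_, ?_, ?_⟩
    · show g (Function.update (Function.update xs j false) j b) = true
      rw [Function.update_idem, hxs_eq]
      exact ((hpos xs).mp h1).1
    · intro i
      rcases eq_or_ne i j with rfl | hij
      · simp [Function.update_self]
      · rw [Function.update_of_ne hij]; exact h2 i
    · intro x' hx' hle
      have hfx' : f (Function.update x' j b) = true := by
        rw [hpos]
        exact ⟨hx', by simp⟩
      have hle' : ∀ i, Function.update x' j b i ≤ x i := by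
        intro i
        rcases eq_or_ne i j with rfl | hij
        · simp [hxj]
        · rw [Function.update_of_ne hij]; exact hle i
      have := h3 _ hfx' hle'
      rw [hcount x' b] at this
      rw [hcount xs false]
      calc ((Finset.univ.erase j).filter (fun i => xs i = true)).card + (if false = true then 1 else 0)
          = ((Finset.univ.erase j).filter (fun i => xs i = true)).card := by simp
        _ ≤ ((Finset.univ.erase j).filter (fun i => x' i = true)).card := by
            have h1' := countE j xs
            rw [hxsj] at h1'
            omega
        _ ≤ trueCount x' := by rw [countE j x']; omega
  · rintro ⟨hxsj, h1, h2, h3⟩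
    have hxs_eq : Function.update xs j b = xs := by
      funext i
      rcases eq_or_ne i j with rfl | hij
      · simp [hxsj]
      · simp [Function.update_of_ne hij]
    refine ⟨?_, ?_, ?_⟩
    · rw [hpos]
      refine ⟨?_, hxsj⟩
      have : g (Function.update (Function.update xs j false) j b) = true := h1
      rwa [Function.update_idem, hxs_eq] at this
    · intro i
      rcases eq_or_ne i j with rfl | hij
      · rw [hxsj, hxj]
      · have := h2 i
        rwa [Function.update_of_ne hij] at this
    · intro x' hx' hle
      have hx'j : x' j = b := ((hpos x').mp hx').2
      have hhx' : g (Function.update (Function.update x' j false) j b) = true := by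
        rw [Function.update_idem]
        have : Function.update x' j b = x' := by
          funext i
          rcases eq_or_ne i j with rfl | hij
          · simp [hx'j]
          · simp [Function.update_of_ne hij]
        rw [this]
        exact ((hpos x').mp hx').1
      have hle' : ∀ i, Function.update x' j false i ≤ x i := by
        intro i
        rcases eq_or_ne i j with rfl | hij
        · simp [Function.update_self]
        · rw [Function.update_of_ne hij]; exact hle i
      have key := h3 _ hhx' hle'
      rw [hcount xs false, hcount x' false] at key
      rw [countE j xs, countE j x', hxsj, hx'j]
      omega
end
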